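/- Let 1 ≤ p < ∞, 0 < q, r < ∞, let u, v, w be weights on (a,b), and let {x_k}_{k=N}^∞ ⊂ [a,b] with N ∈ ℤ be a discretizing sequence of W*(t) = ∫_t^b w. For k ≥ N+1 let B(x_{k-1}, x_k) denote the best constant of the local Hardy inequality, i.e. B(x_{k-1}, x_k) := sup over h ∈ 𝔐⁺(x_{k-1}, x_k) of (∫_{x_{k-1}}^{x_k} (∫_{x_{k-1}}^t h(s) ds)^q u(t) dt)^{1/q} / (∫_{x_{k-1}}^{x_k} h(t)^p v(t) dt)^{1/p}. Then there exists a positive constant 𝒞' such that (Σ_{k=N+1}^∞ 2^{-k} (∫_{x_{k-1}}^{x_k} (∫_{x_{k-1}}^t f)^q u(t) dt)^{r/q})^{1/r} ≤ 𝒞' (Σ_{k=N+1}^∞ ∫_{x_{k-1}}^{x_k} f^p v)^{1/p} holds for all f ∈ 𝔐⁺(a,b) if and only if there exists a positive constant C' such that (Σ_{k=N+1}^∞ 2^{-k} a_k^r B(x_{k-1}, x_k)^r)^{1/r} ≤ C' (Σ_{k=N+1}^∞ a_k^p)^{1/p} holds for every sequence of non-negative numbers {a_k}_{k=N+1}^∞.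 Moreover, the best constants satisfy 𝒞' ≈ C'. -/

import Mathlib

open MeasureTheory Set ENNReal NNReal

noncomputable section

/-- The open interval `(a, b)` with extended-real endpoints, viewed as a set of reals. -/
def io (a b : EReal) : Set ℝ := {x : ℝ | a < (x : EReal) ∧ (x : EReal) < b}

/-- A weight on `(a, b)`: a measurable function which is positive and finite on `(a, b)`. -/
def IsWeight (a b : EReal) (u : ℝ → ℝ≥0∞) : Prop :=
  Measurable u ∧ ∀ x ∈ io a b, 0 < u x ∧ u x < ⊤

/-- `W*(t) = ∫_t^b w`. -/
def Wstar (b : EReal) (w : ℝ → ℝ≥0∞) (t : ℝ) : ℝ≥0∞ := ∫⁻ s in io t b, w s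

/-- `{x_k}_{k=N}^∞ ⊂ [a, b]` is a discretizing sequence of `W*` with constants
`d₁, d₂`: it is strictly increasing, starts at `a`, and `W*(x_k) ≈ 2 ^ (-k)`. -/
def IsDiscretizing (a b : EReal) (w : ℝ → ℝ≥0∞) (N : ℤ) (x : ℤ → ℝ)
    (d₁ d₂ : ℝ≥0∞) : Prop :=
  (x N : EReal) = a ∧
  (∀ k : ℤ, N ≤ k → x k < x (k + 1)) ∧
  (∀ k : ℤ, N ≤ k → a ≤ (x k : EReal) ∧ (x k : EReal) ≤ b) ∧
  ∀ k : ℤ, N ≤ k →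
    d₁ * (2 : ℝ≥0∞) ^ (-(k : ℝ)) ≤ Wstar b w (x k) ∧
    Wstar b w (x k) ≤ d₂ * (2 : ℝ≥0∞) ^ (-(k : ℝ))

/-- The left-hand side of the first discretized inequality `(3.3)`. -/
def lhsD1 (N : ℤ) (x : ℤ → ℝ) (q r : ℝ) (u f : ℝ → ℝ≥0∞) : ℝ≥0∞ :=
  (∑' j : ℕ, (2 : ℝ≥0∞) ^ (-((N + 1 + j : ℤ) : ℝ)) *
    (∫⁻ t in Ioo (x (N + j)) (x (N + 1 + j)),
      (∫⁻ s in Ioo (x (N + j)) t, f s) ^ q * u t) ^ (r / q)) ^ (1 / r)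

/-- The right-hand side (without the constant) of the discretized inequalities. -/
def rhsD (N : ℤ) (x : ℤ → ℝ) (p : ℝ) (v f : ℝ → ℝ≥0∞) : ℝ≥0∞ :=
  (∑' j : ℕ, ∫⁻ t in Ioo (x (N + j)) (x (N + 1 + j)), f t ^ p * v t) ^ (1 / p)

/-- `B(y, z)`: the best constant of the local weighted Hardy inequality on `(y, z)`. -/
def Bconst (y z : ℝ) (p q : ℝ) (u v : ℝ → ℝ≥0∞) : ℝ≥0∞ :=
  ⨆ (h : ℝ → ℝ≥0∞) (_ : Measurable h),
    (∫⁻ t in Ioo y z, (∫⁻ s in Ioo y t, h s) ^ q * u t) ^ (1 / q) /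
      (∫⁻ t in Ioo y z, h t ^ p * v t) ^ (1 / p)


namespace DRF

def LI (y z q : ℝ) (u f : ℝ → ℝ≥0∞) : ℝ≥0∞ :=
  ∫⁻ t in Ioo y z, (∫⁻ s in Ioo y t, f s) ^ q * u t

def QI (y z p : ℝ) (v f : ℝ → ℝ≥0∞) : ℝ≥0∞ :=
  ∫⁻ t in Ioo y z, f t ^ p * v t

lemma Bconst_eq (y z p q : ℝ) (u v : ℝ → ℝ≥0∞) :
    Bconst y z p q u v = ⨆ (h : ℝ → ℝ≥0∞) (_ : Measurable h),
      (LI y z q u h) ^ (1 / q) / (QI y z p v h) ^ (1 / p) := rfl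

lemma two_rpow_ne_top (c : ℝ) : (2 : ℝ≥0∞) ^ c ≠ ⊤ := by
  rw [show (2 : ℝ≥0∞) = ((2 : ℝ≥0) : ℝ≥0∞) by norm_cast,
    ← ENNReal.coe_rpow_of_ne_zero (by norm_num) c]
  exact ENNReal.coe_ne_top

lemma two_rpow_pos (c : ℝ) : 0 < (2 : ℝ≥0∞) ^ c :=
  ENNReal.rpow_pos (by norm_num) (by norm_num)

lemma two_rpow_rpow_ne_zero (c e : ℝ) : ((2 : ℝ≥0∞) ^ c) ^ e ≠ 0 :=
  (ENNReal.rpow_pos (two_rpow_pos c) (two_rpow_ne_top c)).ne'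

lemma rpow_inv_rpow_self {c : ℝ} (hc : c ≠ 0) (X : ℝ≥0∞) : (X ^ (1 / c)) ^ c = X := by
  rw [← ENNReal.rpow_mul, one_div, inv_mul_cancel₀ hc, ENNReal.rpow_one]

lemma rpow_self_rpow_inv {c : ℝ} (hc : c ≠ 0) (X : ℝ≥0∞) : (X ^ c) ^ (1 / c) = X := by
  rw [← ENNReal.rpow_mul, mul_one_div, div_self hc, ENNReal.rpow_one]

lemma rpow_inv_rpow_div {q : ℝ} (r : ℝ) (hq : q ≠ 0) (X : ℝ≥0∞) :
    (X ^ (1 / q)) ^ r = X ^ (r / q) := by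
  rw [← ENNReal.rpow_mul, one_div, inv_mul_eq_div]

lemma rpow_div_rpow_inv {q r : ℝ} (hq : q ≠ 0) (hr : r ≠ 0) (X : ℝ≥0∞) :
    (X ^ (r / q)) ^ (1 / r) = X ^ (1 / q) := by
  rw [← ENNReal.rpow_mul]
  congr 1
  field_simp

lemma theta_limit {r : ℝ} (hr : 0 < r) {X Y : ℝ≥0∞}
    (h : ∀ θ : ℝ≥0∞, 0 < θ → θ < 1 → θ ^ r * X ≤ Y) : X ≤ Y := by
  by_contra hc
  push_neg at hc
  rcases eq_or_ne X ⊤ with hX | hX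
  · have h2 := h (1 / 2) (by norm_num) (by norm_num)
    have hne : ((1 : ℝ≥0∞) / 2) ^ r ≠ 0 :=
      (ENNReal.rpow_pos (by norm_num) (by norm_num)).ne'
    rw [hX, ENNReal.mul_top hne] at h2
    exact absurd (top_le_iff.mp h2) (hc.trans_le le_top).ne
  · have hX0 : X ≠ 0 := by
      rintro rfl; exact (not_lt.mpr (zero_le)) hc
    have htlt : Y / X < 1 := ENNReal.div_lt_of_lt_mul (by simpa using hc)
    obtain ⟨t', ht1, ht2⟩ := exists_between htlt
    have ht'0 : 0 < t' := lt_of_le_of_lt (zero_le) ht1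
    have ht'top : t' ≠ ⊤ := (ht2.trans one_lt_top).ne
    have hr' : (0 : ℝ) < 1 / r := one_div_pos.mpr hr
    set θ := t' ^ (1 / r) with hθ
    have hθ1 : θ < 1 := ENNReal.rpow_lt_one ht2 hr'
    have hθ0 : 0 < θ := ENNReal.rpow_pos ht'0 ht'top
    have hθr : θ ^ r = t' := by
      rw [hθ, ← ENNReal.rpow_mul, one_div, inv_mul_cancel₀ hr.ne', ENNReal.rpow_one]
    have hle := h θ hθ0 hθ1
    rw [hθr] at hle
    have hYt : Y / X * X = Y := ENNReal.div_mul_cancel hX0 hX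
    have hlt2 : Y < t' * X := by
      calc Y = Y / X * X := hYt.symm
        _ < t' * X := ENNReal.mul_lt_mul_left hX0 hX ht1
    exact absurd (hlt2.trans_le hle) (lt_irrefl _)

lemma QI_zero_inner {y z p : ℝ} (hp : 0 < p) {v f : ℝ → ℝ≥0∞} (hf : Measurable f)
    (hv : Measurable v) (hvpos : ∀ t ∈ Ioo y z, v t ≠ 0)
    (hQ : QI y z p v f = 0) {t : ℝ} (ht : t ≤ z) :
    ∫⁻ s in Ioo y t, f s = 0 := by
  have hmeas : Measurable fun t => f t ^ p * v t := (hf.pow_const p).mul hv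
  have h0 : (fun t => f t ^ p * v t) =ᵐ[volume.restrict (Ioo y z)] 0 :=
    (lintegral_eq_zero_iff hmeas).mp hQ
  have hf0 : f =ᵐ[volume.restrict (Ioo y z)] 0 := by
    have hmem := ae_restrict_mem (μ := volume) (measurableSet_Ioo : MeasurableSet (Ioo y z))
    filter_upwards [h0, hmem] with s hs hsmem
    rcases mul_eq_zero.mp hs with h | h
    · rcases ENNReal.rpow_eq_zero_iff.mp h with ⟨h1, _⟩ | ⟨_, h2⟩
      · exact h1
      · linarith
    · exact absurd h (hvpos s hsmem)
  have hzero : ∫⁻ s in Ioo y z, f s = 0 := by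
    rw [lintegral_congr_ae hf0]; simp
  have hmono : ∫⁻ s in Ioo y t, f s ≤ ∫⁻ s in Ioo y z, f s :=
    lintegral_mono_set (Ioo_subset_Ioo le_rfl ht)
  exact le_antisymm (hmono.trans hzero.le) (zero_le)

lemma LI_zero {y z p q : ℝ} (hp : 0 < p) (hq : 0 < q) {u v f : ℝ → ℝ≥0∞}
    (hf : Measurable f) (hv : Measurable v) (hvpos : ∀ t ∈ Ioo y z, v t ≠ 0)
    (hQ : QI y z p v f = 0) : LI y z q u f = 0 := by
  have hcongr : LI y z q u f = ∫⁻ _t in Ioo y z, (0 : ℝ≥0∞) := by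
    refine setLIntegral_congr_fun measurableSet_Ioo (fun t ht => ?_)
    rw [QI_zero_inner hp hf hv hvpos hQ ht.2.le, ENNReal.zero_rpow_of_pos hq, zero_mul]
  rw [hcongr]; simp

lemma P_le_B_mul_Q {y z p q : ℝ} (hp : 0 < p) (hq : 0 < q) {u v f : ℝ → ℝ≥0∞}
    (hf : Measurable f) (hv : Measurable v) (hvpos : ∀ t ∈ Ioo y z, v t ≠ 0)
    (hQtop : QI y z p v f ≠ ⊤) :
    (LI y z q u f) ^ (1 / q) ≤ Bconst y z p q u v * (QI y z p v f) ^ (1 / p) := by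
  rcases eq_or_ne (QI y z p v f) 0 with h0 | h0
  · rw [LI_zero hp hq hf hv hvpos h0,
      ENNReal.zero_rpow_of_pos (one_div_pos.mpr hq)]
    exact zero_le
  · have hQ0 : (QI y z p v f) ^ (1 / p) ≠ 0 := by
      simp only [ne_eq, ENNReal.rpow_eq_zero_iff, not_or]
      constructor
      · rintro ⟨h, -⟩; exact h0 h
      · rintro ⟨h, -⟩; exact hQtop h
    have hQt : (QI y z p v f) ^ (1 / p) ≠ ⊤ :=
      ENNReal.rpow_ne_top_of_nonneg (one_div_pos.mpr hp).le hQtop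
    have hB : (LI y z q u f) ^ (1 / q) / (QI y z p v f) ^ (1 / p) ≤ Bconst y z p q u v := by
      rw [Bconst_eq]
      exact le_iSup₂ (f := fun h (_ : Measurable h) =>
        (LI y z q u h) ^ (1 / q) / (QI y z p v h) ^ (1 / p)) f hf
    calc (LI y z q u f) ^ (1 / q)
        = (LI y z q u f) ^ (1 / q) / (QI y z p v f) ^ (1 / p) * (QI y z p v f) ^ (1 / p) :=
          (ENNReal.div_mul_cancel hQ0 hQt).symm
      _ ≤ _ := mul_le_mul_left hB _

lemma LI_congr {y z q : ℝ} {u f g : ℝ → ℝ≥0∞} (hfg : ∀ t ∈ Ioo y z, f t = g t) :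
    LI y z q u f = LI y z q u g := by
  refine setLIntegral_congr_fun measurableSet_Ioo (fun t ht => ?_)
  have : (∫⁻ s in Ioo y t, f s) = ∫⁻ s in Ioo y t, g s :=
    setLIntegral_congr_fun measurableSet_Ioo
      (fun s hs => hfg s (Ioo_subset_Ioo le_rfl ht.2.le hs))
  rw [this]

lemma QI_congr {y z p : ℝ} {v f g : ℝ → ℝ≥0∞} (hfg : ∀ t ∈ Ioo y z, f t = g t) :
    QI y z p v f = QI y z p v g := by
  refine setLIntegral_congr_fun measurableSet_Ioo (fun t ht => ?_)
  rw [hfg t ht]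

lemma QI_zero_fun {y z p : ℝ} (hp : 0 < p) (v : ℝ → ℝ≥0∞) :
    QI y z p v (fun _ => 0) = 0 := by
  have : QI y z p v (fun _ => 0) = ∫⁻ _t in Ioo y z, (0 : ℝ≥0∞) := by
    refine setLIntegral_congr_fun measurableSet_Ioo (fun t _ => ?_)
    rw [ENNReal.zero_rpow_of_pos hp, zero_mul]
  rw [this]; simp

lemma exists_good_g {y z p q : ℝ} (hp : 0 < p) (hq : 0 < q) {u v : ℝ → ℝ≥0∞}
    {θ α : ℝ≥0∞} (hθ0 : 0 < θ) (hθ1 : θ < 1) (hα0 : α ≠ 0) (hαt : α ≠ ⊤)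
    (hB0 : Bconst y z p q u v ≠ 0) (hBt : Bconst y z p q u v ≠ ⊤) :
    ∃ g : ℝ → ℝ≥0∞, Measurable g ∧ (∀ t, t ∉ Ioo y z → g t = 0) ∧
      QI y z p v g ≤ α ^ p ∧ θ * α * Bconst y z p q u v ≤ (LI y z q u g) ^ (1 / q) := by
  set B := Bconst y z p q u v with hBdef
  have hlt : θ * B < B := by
    calc θ * B < 1 * B := ENNReal.mul_lt_mul_left hB0 hBt hθ1
      _ = B := one_mul B
  have hsup : θ * B < ⨆ (h : ℝ → ℝ≥0∞) (_ : Measurable h),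
      (LI y z q u h) ^ (1 / q) / (QI y z p v h) ^ (1 / p) := by
    rw [← Bconst_eq]; exact hlt
  rw [lt_iSup_iff] at hsup
  obtain ⟨h, hh⟩ := hsup
  rw [lt_iSup_iff] at hh
  obtain ⟨hhm, hratio⟩ := hh
  set P := (LI y z q u h) ^ (1 / q) with hP
  set Q := (QI y z p v h) ^ (1 / p) with hQ
  have hratio_le : P / Q ≤ B := by
    rw [hBdef, Bconst_eq]
    exact le_iSup₂ (f := fun h (_ : Measurable h) =>
      (LI y z q u h) ^ (1 / q) / (QI y z p v h) ^ (1 / p)) h hhm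
  have hratio_pos : P / Q ≠ 0 := by
    intro hz; rw [hz] at hratio
    exact (not_lt.mpr (zero_le)) hratio
  have hQne0 : Q ≠ 0 := by
    intro hz
    rcases eq_or_ne P 0 with hP0 | hP0
    · exact hratio_pos (by rw [hP0, hz]; simp)
    · rw [hz, ENNReal.div_zero hP0] at hratio_le
      exact hBt (top_le_iff.mp hratio_le)
  have hQnetop : Q ≠ ⊤ := by
    intro hz
    exact hratio_pos (by rw [hz, ENNReal.div_top])
  have hPQ : θ * B * Q < P :=
    (ENNReal.lt_div_iff_mul_lt (Or.inl hQne0) (Or.inl hQnetop)).mp hratio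
  set c := α / Q with hc
  have hc0 : c ≠ 0 := by
    rw [hc]; simp [ENNReal.div_eq_zero_iff, hα0, hQnetop]
  have hct : c ≠ ⊤ := by
    rw [hc]
    simp only [ne_eq, ENNReal.div_eq_top, not_or, not_and]
    exact ⟨fun _ => hQne0, fun h' => absurd h' hαt⟩
  have hcQ : c * Q = α := by
    rw [hc, ENNReal.div_mul_cancel hQne0 hQnetop]
  refine ⟨(Ioo y z).indicator (fun t => c * h t),
    (measurable_const.mul hhm).indicator measurableSet_Ioo,
    fun t ht => indicator_of_notMem ht _, ?_, ?_⟩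
  · have hQg : QI y z p v ((Ioo y z).indicator (fun t => c * h t))
        = c ^ p * QI y z p v h := by
      have step1 : QI y z p v ((Ioo y z).indicator (fun t => c * h t))
          = ∫⁻ t in Ioo y z, c ^ p * (h t ^ p * v t) := by
        refine setLIntegral_congr_fun measurableSet_Ioo (fun t ht => ?_)
        rw [indicator_of_mem ht, ENNReal.mul_rpow_of_nonneg _ _ hp.le, mul_assoc]
      rw [step1, lintegral_const_mul' _ _ (ENNReal.rpow_ne_top_of_nonneg hp.le hct)]
      rfl
    rw [hQg]
    have hQIh : QI y z p v h = Q ^ p := by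
      rw [hQ, ← ENNReal.rpow_mul, one_div, inv_mul_cancel₀ hp.ne', ENNReal.rpow_one]
    rw [hQIh, ← ENNReal.mul_rpow_of_nonneg _ _ hp.le, hcQ]
  · have hLg : LI y z q u ((Ioo y z).indicator (fun t => c * h t))
        = c ^ q * LI y z q u h := by
      have step1 : LI y z q u ((Ioo y z).indicator (fun t => c * h t))
          = ∫⁻ t in Ioo y z, c ^ q * ((∫⁻ s in Ioo y t, h s) ^ q * u t) := by
        refine setLIntegral_congr_fun measurableSet_Ioo (fun t ht => ?_)
        have hinner : (∫⁻ s in Ioo y t, (Ioo y z).indicator (fun t => c * h t) s)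
            = c * ∫⁻ s in Ioo y t, h s := by
          rw [← lintegral_const_mul' _ _ hct]
          refine setLIntegral_congr_fun measurableSet_Ioo (fun s hs => ?_)
          rw [indicator_of_mem (Ioo_subset_Ioo le_rfl ht.2.le hs)]
        rw [hinner, ENNReal.mul_rpow_of_nonneg _ _ hq.le, mul_assoc]
      rw [step1, lintegral_const_mul' _ _ (ENNReal.rpow_ne_top_of_nonneg hq.le hct)]
      rfl
    rw [hLg, ENNReal.mul_rpow_of_nonneg _ _ (one_div_pos.mpr hq).le,
      rpow_self_rpow_inv hq.ne', ← hP]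
    calc θ * α * B = c * (θ * B * Q) := by rw [← hcQ]; ring
      _ ≤ c * P := mul_le_mul_right hPQ.le c

lemma termA {r q : ℝ} (hr : 0 < r) (hq : 0 < q) {W θ α B L : ℝ≥0∞}
    (h : θ * α * B ≤ L ^ (1 / q)) :
    θ ^ r * (W * α ^ r * B ^ r) ≤ W * L ^ (r / q) := by
  have h1 := ENNReal.rpow_le_rpow h hr.le
  rw [ENNReal.mul_rpow_of_nonneg _ _ hr.le, ENNReal.mul_rpow_of_nonneg _ _ hr.le,
    rpow_inv_rpow_div r hq.ne'] at h1
  calc θ ^ r * (W * α ^ r * B ^ r) = W * (θ ^ r * α ^ r * B ^ r) := by ring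
    _ ≤ W * L ^ (r / q) := mul_le_mul_right h1 _

lemma termB {r q : ℝ} (hr : 0 < r) (hq : 0 < q) {W B L Q : ℝ≥0∞}
    (h : L ^ (1 / q) ≤ B * Q) :
    W * L ^ (r / q) ≤ W * Q ^ r * B ^ r := by
  have h1 := ENNReal.rpow_le_rpow h hr.le
  rw [ENNReal.mul_rpow_of_nonneg _ _ hr.le] at h1
  calc W * L ^ (r / q) = W * (L ^ (1 / q)) ^ r := by rw [rpow_inv_rpow_div r hq.ne']
    _ ≤ W * (B ^ r * Q ^ r) := mul_le_mul_right h1 _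
    _ = W * Q ^ r * B ^ r := by ring

end DRF

theorem discrete_reduction_first (p q r : ℝ) (hp : 1 ≤ p) (hq : 0 < q)
    (hr : 0 < r) (d₁ d₂ : ℝ≥0∞) (hd₁ : 0 < d₁) (hd₂ : d₂ < ⊤) :
    ∃ c₁ c₂ : ℝ≥0∞, 0 < c₁ ∧ c₂ < ⊤ ∧
      ∀ (a b : EReal), a < b → ∀ u v w : ℝ → ℝ≥0∞,
        IsWeight a b u → IsWeight a b v → IsWeight a b w →
        ∀ (N : ℤ) (x : ℤ → ℝ), IsDiscretizing a b w N x d₁ d₂ →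
        ((∃ C' : ℝ≥0∞, 0 < C' ∧ C' < ⊤ ∧ ∀ f : ℝ → ℝ≥0∞, Measurable f →
            lhsD1 N x q r u f ≤ C' * rhsD N x p v f) ↔
          (∃ C : ℝ≥0∞, 0 < C ∧ C < ⊤ ∧ ∀ aseq : ℕ → ℝ≥0,
            (∑' k : ℕ, (2 : ℝ≥0∞) ^ (-((N + 1 + k : ℤ) : ℝ)) * (aseq k : ℝ≥0∞) ^ r *
                Bconst (x (N + k)) (x (N + 1 + k)) p q u v ^ r) ^ (1 / r) ≤
              C * (∑' k : ℕ, (aseq k : ℝ≥0∞) ^ p) ^ (1 / p))) ∧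
        c₁ * sInf {C : ℝ≥0∞ | ∀ aseq : ℕ → ℝ≥0,
              (∑' k : ℕ, (2 : ℝ≥0∞) ^ (-((N + 1 + k : ℤ) : ℝ)) * (aseq k : ℝ≥0∞) ^ r *
                  Bconst (x (N + k)) (x (N + 1 + k)) p q u v ^ r) ^ (1 / r) ≤
                C * (∑' k : ℕ, (aseq k : ℝ≥0∞) ^ p) ^ (1 / p)} ≤
            sInf {C' : ℝ≥0∞ | ∀ f : ℝ → ℝ≥0∞, Measurable f →
              lhsD1 N x q r u f ≤ C' * rhsD N x p v f} ∧
        sInf {C' : ℝ≥0∞ | ∀ f : ℝ → ℝ≥0∞, Measurable f →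
            lhsD1 N x q r u f ≤ C' * rhsD N x p v f} ≤
          c₂ * sInf {C : ℝ≥0∞ | ∀ aseq : ℕ → ℝ≥0,
              (∑' k : ℕ, (2 : ℝ≥0∞) ^ (-((N + 1 + k : ℤ) : ℝ)) * (aseq k : ℝ≥0∞) ^ r *
                  Bconst (x (N + k)) (x (N + 1 + k)) p q u v ^ r) ^ (1 / r) ≤
                C * (∑' k : ℕ, (aseq k : ℝ≥0∞) ^ p) ^ (1 / p)} := by
  refine ⟨1, 1, one_pos, one_lt_top, ?_⟩
  intro a b hab u v w hu hv hw N x hx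
  obtain ⟨hxN, hxlt, hxmem, hW⟩ := hx
  have hp0 : (0:ℝ) < p := lt_of_lt_of_le one_pos hp
  have h1r : (0:ℝ) < 1 / r := one_div_pos.mpr hr
  have h1p : (0:ℝ) < 1 / p := one_div_pos.mpr hp0
  have hrq : (0:ℝ) < r / q := div_pos hr hq
  have hmono : ∀ k : ℤ, N ≤ k → ∀ l : ℤ, k ≤ l → x k ≤ x l := by
    have key : ∀ (n : ℕ) (k : ℤ), N ≤ k → x k ≤ x (k + n) := by
      intro n
      induction n with
      | zero => intro k _; norm_num
      | succ m ih =>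
        intro k hk
        have h1 := ih k hk
        have h2 := (hxlt (k + m) (by omega)).le
        have h3 : (k + ((m + 1 : ℕ) : ℤ)) = k + (m : ℤ) + 1 := by push_cast; ring
        rw [h3]
        exact h1.trans h2
    intro k hNk l hkl
    have h4 : l = k + (((l - k).toNat : ℕ) : ℤ) := by omega
    rw [h4]
    exact key _ k hNk
  have hsub : ∀ j : ℕ, ∀ t ∈ Ioo (x (N + (j:ℤ))) (x (N + 1 + (j:ℤ))), t ∈ io a b := by
    intro j t ht
    constructor
    · have h1 : a ≤ ((x (N + (j:ℤ)) : ℝ) : EReal) := (hxmem (N + j) (by omega)).1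
      refine lt_of_le_of_lt h1 ?_
      exact_mod_cast ht.1
    · have h2 : ((x (N + 1 + (j:ℤ)) : ℝ) : EReal) ≤ b := (hxmem (N + 1 + j) (by omega)).2
      refine lt_of_lt_of_le ?_ h2
      exact_mod_cast ht.2
  have hvpos : ∀ j : ℕ, ∀ t ∈ Ioo (x (N + (j:ℤ))) (x (N + 1 + (j:ℤ))), v t ≠ 0 :=
    fun j t ht => (hv.2 t (hsub j t ht)).1.ne'
  have hnotmem : ∀ i j : ℕ, i ≠ j → ∀ t ∈ Ioo (x (N + (i:ℤ))) (x (N + 1 + (i:ℤ))),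
      t ∉ Ioo (x (N + (j:ℤ))) (x (N + 1 + (j:ℤ))) := by
    intro i j hij t ht htj
    rcases lt_or_gt_of_ne hij with h | h
    · have hsep : x (N + 1 + (i:ℤ)) ≤ x (N + (j:ℤ)) :=
        hmono (N + 1 + i) (by omega) (N + j) (by omega)
      exact lt_asymm (ht.2.trans_le hsep) htj.1
    · have hsep : x (N + 1 + (j:ℤ)) ≤ x (N + (i:ℤ)) :=
        hmono (N + 1 + j) (by omega) (N + i) (by omega)
      exact lt_asymm (htj.2.trans_le hsep) ht.1
  have hlhs_eq : ∀ f : ℝ → ℝ≥0∞, lhsD1 N x q r u f =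
      (∑' j : ℕ, (2 : ℝ≥0∞) ^ (-((N + 1 + j : ℤ) : ℝ)) *
        (DRF.LI (x (N + (j:ℤ))) (x (N + 1 + (j:ℤ))) q u f) ^ (r / q)) ^ (1 / r) :=
    fun f => rfl
  have hrhs_eq : ∀ f : ℝ → ℝ≥0∞, rhsD N x p v f =
      (∑' j : ℕ, DRF.QI (x (N + (j:ℤ))) (x (N + 1 + (j:ℤ))) p v f) ^ (1 / p) :=
    fun f => rfl
  -- per-interval application of the functional inequality
  have key1 : ∀ C' : ℝ≥0∞, (∀ f, Measurable f → lhsD1 N x q r u f ≤ C' * rhsD N x p v f) →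
      ∀ (j : ℕ) (h : ℝ → ℝ≥0∞), Measurable h →
        (∀ t, t ∉ Ioo (x (N + (j:ℤ))) (x (N + 1 + (j:ℤ))) → h t = 0) →
        ((2 : ℝ≥0∞) ^ (-((N + 1 + j : ℤ) : ℝ))) ^ (1 / r) *
            (DRF.LI (x (N + (j:ℤ))) (x (N + 1 + (j:ℤ))) q u h) ^ (1 / q)
          ≤ C' * (DRF.QI (x (N + (j:ℤ))) (x (N + 1 + (j:ℤ))) p v h) ^ (1 / p) := by
    intro C' hC' j h hm hsupp
    have hfun := hC' h hm
    rw [hlhs_eq, hrhs_eq] at hfun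
    have hQ0 : ∀ i : ℕ, i ≠ j → DRF.QI (x (N + (i:ℤ))) (x (N + 1 + (i:ℤ))) p v h = 0 := by
      intro i hij
      have hcongr : DRF.QI (x (N + (i:ℤ))) (x (N + 1 + (i:ℤ))) p v h
          = DRF.QI (x (N + (i:ℤ))) (x (N + 1 + (i:ℤ))) p v (fun _ => 0) :=
        DRF.QI_congr (fun t ht => hsupp t (hnotmem i j hij t ht))
      rw [hcongr, DRF.QI_zero_fun hp0]
    rw [tsum_eq_single j hQ0] at hfun
    refine le_trans (le_of_eq ?_) (le_trans (ENNReal.rpow_le_rpow (ENNReal.le_tsum j) h1r.le) hfun)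
    rw [ENNReal.mul_rpow_of_nonneg _ _ h1r.le, DRF.rpow_div_rpow_inv hq.ne' hr.ne']
  -- crude bound on Bconst
  have hBle : ∀ C' : ℝ≥0∞, (∀ f, Measurable f → lhsD1 N x q r u f ≤ C' * rhsD N x p v f) →
      ∀ j : ℕ, ((2 : ℝ≥0∞) ^ (-((N + 1 + j : ℤ) : ℝ))) ^ (1 / r) *
        Bconst (x (N + j)) (x (N + 1 + j)) p q u v ≤ C' := by
    intro C' hC' j
    rw [DRF.Bconst_eq, ENNReal.mul_iSup]
    refine iSup_le fun h => ?_
    rw [ENNReal.mul_iSup]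
    refine iSup_le fun hm => ?_
    rw [← mul_div_assoc]
    refine ENNReal.div_le_of_le_mul ?_
    have hLI : DRF.LI (x (N + (j:ℤ))) (x (N + 1 + (j:ℤ))) q u h
        = DRF.LI (x (N + (j:ℤ))) (x (N + 1 + (j:ℤ))) q u
          ((Ioo (x (N + (j:ℤ))) (x (N + 1 + (j:ℤ)))).indicator h) :=
      DRF.LI_congr (fun t ht => (indicator_of_mem ht h).symm)
    have hQI : DRF.QI (x (N + (j:ℤ))) (x (N + 1 + (j:ℤ))) p v h
        = DRF.QI (x (N + (j:ℤ))) (x (N + 1 + (j:ℤ))) p v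
          ((Ioo (x (N + (j:ℤ))) (x (N + 1 + (j:ℤ)))).indicator h) :=
      DRF.QI_congr (fun t ht => (indicator_of_mem ht h).symm)
    rw [hLI, hQI]
    exact key1 C' hC' j _ (hm.indicator measurableSet_Ioo)
      (fun t ht => indicator_of_notMem ht h)
  -- Lemma A : functional inequality implies sequence inequality (same constant, finite)
  have lemA : ∀ C' : ℝ≥0∞, C' ≠ ⊤ →
      (∀ f, Measurable f → lhsD1 N x q r u f ≤ C' * rhsD N x p v f) →
      ∀ aseq : ℕ → ℝ≥0,
        (∑' k : ℕ, (2 : ℝ≥0∞) ^ (-((N + 1 + k : ℤ) : ℝ)) * (aseq k : ℝ≥0∞) ^ r *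
            Bconst (x (N + k)) (x (N + 1 + k)) p q u v ^ r) ^ (1 / r) ≤
          C' * (∑' k : ℕ, (aseq k : ℝ≥0∞) ^ p) ^ (1 / p) := by
    intro C' hCt hfun aseq
    have hble := hBle C' hfun
    have hBfin : ∀ j : ℕ, Bconst (x (N + (j:ℤ))) (x (N + 1 + (j:ℤ))) p q u v ≠ ⊤ := by
      intro j hBt
      have h2 := hble j
      rw [hBt, ENNReal.mul_top (DRF.two_rpow_rpow_ne_zero _ _)] at h2
      exact hCt (top_le_iff.mp h2)
    rcases eq_or_ne C' 0 with rfl | hC0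
    · have hB0 : ∀ j : ℕ, Bconst (x (N + (j:ℤ))) (x (N + 1 + (j:ℤ))) p q u v = 0 := by
        intro j
        have h2 := hble j
        rw [le_zero_iff] at h2
        rcases mul_eq_zero.mp h2 with h | h
        · exact absurd h (DRF.two_rpow_rpow_ne_zero _ _)
        · exact h
      have hz : ∀ k : ℕ, (2 : ℝ≥0∞) ^ (-((N + 1 + k : ℤ) : ℝ)) * (aseq k : ℝ≥0∞) ^ r *
          Bconst (x (N + k)) (x (N + 1 + k)) p q u v ^ r = 0 := fun k => by
        rw [hB0 k, ENNReal.zero_rpow_of_pos hr, mul_zero]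
      rw [tsum_congr hz, tsum_zero, ENNReal.zero_rpow_of_pos h1r]
      exact zero_le
    rcases eq_or_ne (∑' k : ℕ, (aseq k : ℝ≥0∞) ^ p) ⊤ with hRtop | hRtop
    · rw [hRtop, ENNReal.top_rpow_of_pos h1p, ENNReal.mul_top hC0]; exact le_top
    have hkey : ∀ s : Finset ℕ,
        (∑ j ∈ s, (2 : ℝ≥0∞) ^ (-((N + 1 + j : ℤ) : ℝ)) * (aseq j : ℝ≥0∞) ^ r *
          Bconst (x (N + j)) (x (N + 1 + j)) p q u v ^ r)
          ≤ (C' * (∑' k : ℕ, (aseq k : ℝ≥0∞) ^ p) ^ (1 / p)) ^ r := by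
      intro s
      refine DRF.theta_limit hr ?_
      intro θ hθ0 hθ1
      have hchoice : ∀ j : ℕ, ∃ g : ℝ → ℝ≥0∞, Measurable g ∧
          (∀ t, t ∉ Ioo (x (N + (j:ℤ))) (x (N + 1 + (j:ℤ))) → g t = 0) ∧
          DRF.QI (x (N + (j:ℤ))) (x (N + 1 + (j:ℤ))) p v g ≤ (aseq j : ℝ≥0∞) ^ p ∧
          θ * (aseq j : ℝ≥0∞) * Bconst (x (N + (j:ℤ))) (x (N + 1 + (j:ℤ))) p q u v ≤
            (DRF.LI (x (N + (j:ℤ))) (x (N + 1 + (j:ℤ))) q u g) ^ (1 / q) := by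
        intro j
        rcases eq_or_ne ((aseq j : ℝ≥0∞)) 0 with ha | ha
        · refine ⟨fun _ => 0, measurable_const, fun t _ => rfl, ?_, ?_⟩
          · rw [DRF.QI_zero_fun hp0]; exact zero_le
          · rw [ha, mul_zero, zero_mul]; exact zero_le
        rcases eq_or_ne (Bconst (x (N + (j:ℤ))) (x (N + 1 + (j:ℤ))) p q u v) 0 with hb | hb
        · refine ⟨fun _ => 0, measurable_const, fun t _ => rfl, ?_, ?_⟩
          · rw [DRF.QI_zero_fun hp0]; exact zero_le
          · rw [hb, mul_zero]; exact zero_le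
        · exact DRF.exists_good_g hp0 hq hθ0 hθ1 ha ENNReal.coe_ne_top hb (hBfin j)
      choose g hgm hgs hgQ hgL using hchoice
      have hfm : Measurable (fun t => ∑ j ∈ s, g j t) :=
        Finset.measurable_sum s (fun j _ => hgm j)
      have hfon : ∀ j ∈ s, ∀ t ∈ Ioo (x (N + (j:ℤ))) (x (N + 1 + (j:ℤ))),
          (∑ i ∈ s, g i t) = g j t := by
        intro j hj t ht
        exact Finset.sum_eq_single_of_mem j hj
          (fun i _ hij => hgs i t (hnotmem j i (Ne.symm hij) t ht))
      have hfoff : ∀ i : ℕ, i ∉ s → ∀ t ∈ Ioo (x (N + (i:ℤ))) (x (N + 1 + (i:ℤ))),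
          (∑ j ∈ s, g j t) = 0 := by
        intro i hi t ht
        exact Finset.sum_eq_zero
          (fun j hj => hgs j t (hnotmem i j (fun e => hi (e ▸ hj)) t ht))
      have hlhs : (∑ j ∈ s, θ ^ r *
            ((2 : ℝ≥0∞) ^ (-((N + 1 + j : ℤ) : ℝ)) * (aseq j : ℝ≥0∞) ^ r *
              Bconst (x (N + j)) (x (N + 1 + j)) p q u v ^ r)) ^ (1 / r)
          ≤ lhsD1 N x q r u (fun t => ∑ j ∈ s, g j t) := by
        rw [hlhs_eq]
        refine ENNReal.rpow_le_rpow ?_ h1r.le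
        refine le_trans (Finset.sum_le_sum ?_) (ENNReal.sum_le_tsum s)
        intro j hj
        have hLIj : DRF.LI (x (N + (j:ℤ))) (x (N + 1 + (j:ℤ))) q u (fun t => ∑ i ∈ s, g i t)
            = DRF.LI (x (N + (j:ℤ))) (x (N + 1 + (j:ℤ))) q u (g j) :=
          DRF.LI_congr (hfon j hj)
        rw [hLIj]
        exact DRF.termA hr hq (hgL j)
      have hrhs : rhsD N x p v (fun t => ∑ j ∈ s, g j t)
          ≤ (∑' k : ℕ, (aseq k : ℝ≥0∞) ^ p) ^ (1 / p) := by
        rw [hrhs_eq]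
        refine ENNReal.rpow_le_rpow ?_ h1p.le
        have hzz : ∀ i ∉ s, DRF.QI (x (N + (i:ℤ))) (x (N + 1 + (i:ℤ))) p v
            (fun t => ∑ j ∈ s, g j t) = 0 := by
          intro i hi
          rw [DRF.QI_congr (hfoff i hi), DRF.QI_zero_fun hp0]
        rw [tsum_eq_sum hzz]
        refine le_trans (Finset.sum_le_sum fun i hi => ?_) (ENNReal.sum_le_tsum s)
        rw [DRF.QI_congr (hfon i hi)]
        exact hgQ i
      have hcomb := (hlhs.trans (hfun _ hfm)).trans
        (mul_le_mul_right hrhs C')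
      rw [← Finset.mul_sum] at hcomb
      have h2 := ENNReal.rpow_le_rpow hcomb hr.le
      rwa [DRF.rpow_inv_rpow_self hr.ne'] at h2
    have htsum : (∑' k : ℕ, (2 : ℝ≥0∞) ^ (-((N + 1 + k : ℤ) : ℝ)) * (aseq k : ℝ≥0∞) ^ r *
        Bconst (x (N + k)) (x (N + 1 + k)) p q u v ^ r)
          ≤ (C' * (∑' k : ℕ, (aseq k : ℝ≥0∞) ^ p) ^ (1 / p)) ^ r := by
      rw [ENNReal.tsum_eq_iSup_sum]; exact iSup_le hkey
    calc (∑' k : ℕ, (2 : ℝ≥0∞) ^ (-((N + 1 + k : ℤ) : ℝ)) * (aseq k : ℝ≥0∞) ^ r *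
        Bconst (x (N + k)) (x (N + 1 + k)) p q u v ^ r) ^ (1 / r)
        ≤ ((C' * (∑' k : ℕ, (aseq k : ℝ≥0∞) ^ p) ^ (1 / p)) ^ r) ^ (1 / r) :=
          ENNReal.rpow_le_rpow htsum h1r.le
      _ = C' * (∑' k : ℕ, (aseq k : ℝ≥0∞) ^ p) ^ (1 / p) :=
          DRF.rpow_self_rpow_inv hr.ne' _
  -- Lemma B : sequence inequality implies functional inequality (same positive constant)
  have lemB : ∀ C : ℝ≥0∞, C ≠ 0 →
      (∀ aseq : ℕ → ℝ≥0,
        (∑' k : ℕ, (2 : ℝ≥0∞) ^ (-((N + 1 + k : ℤ) : ℝ)) * (aseq k : ℝ≥0∞) ^ r *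
            Bconst (x (N + k)) (x (N + 1 + k)) p q u v ^ r) ^ (1 / r) ≤
          C * (∑' k : ℕ, (aseq k : ℝ≥0∞) ^ p) ^ (1 / p)) →
      ∀ f : ℝ → ℝ≥0∞, Measurable f → lhsD1 N x q r u f ≤ C * rhsD N x p v f := by
    intro C hC0 hseq f hfm
    by_cases htop : ∃ j : ℕ, DRF.QI (x (N + (j:ℤ))) (x (N + 1 + (j:ℤ))) p v f = ⊤
    · obtain ⟨j, hj⟩ := htop
      have hrtop : rhsD N x p v f = ⊤ := by
        rw [hrhs_eq]
        have hts : (∑' i : ℕ, DRF.QI (x (N + (i:ℤ))) (x (N + 1 + (i:ℤ))) p v f) = ⊤ :=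
          top_le_iff.mp (hj ▸ ENNReal.le_tsum j)
        rw [hts, ENNReal.top_rpow_of_pos h1p]
      rw [hrtop, ENNReal.mul_top hC0]; exact le_top
    push_neg at htop
    have hacoe : ∀ j : ℕ,
        ((((DRF.QI (x (N + (j:ℤ))) (x (N + 1 + (j:ℤ))) p v f) ^ (1 / p)).toNNReal : ℝ≥0∞))
          = (DRF.QI (x (N + (j:ℤ))) (x (N + 1 + (j:ℤ))) p v f) ^ (1 / p) := fun j =>
      ENNReal.coe_toNNReal (ENNReal.rpow_ne_top_of_nonneg h1p.le (htop j))
    have h2 := hseq (fun j => ((DRF.QI (x (N + (j:ℤ))) (x (N + 1 + (j:ℤ))) p v f) ^ (1 / p)).toNNReal)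
    have h3 : (∑' j : ℕ,
        ((((DRF.QI (x (N + (j:ℤ))) (x (N + 1 + (j:ℤ))) p v f) ^ (1 / p)).toNNReal : ℝ≥0∞)) ^ p)
        = ∑' j : ℕ, DRF.QI (x (N + (j:ℤ))) (x (N + 1 + (j:ℤ))) p v f :=
      tsum_congr fun j => by rw [hacoe j, DRF.rpow_inv_rpow_self hp0.ne']
    rw [h3] at h2
    have h1 : lhsD1 N x q r u f ≤
        (∑' j : ℕ, (2 : ℝ≥0∞) ^ (-((N + 1 + j : ℤ) : ℝ)) *
          ((((DRF.QI (x (N + (j:ℤ))) (x (N + 1 + (j:ℤ))) p v f) ^ (1 / p)).toNNReal : ℝ≥0∞)) ^ r *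
          Bconst (x (N + j)) (x (N + 1 + j)) p q u v ^ r) ^ (1 / r) := by
      rw [hlhs_eq]
      refine ENNReal.rpow_le_rpow (ENNReal.tsum_le_tsum fun j => ?_) h1r.le
      have hP := DRF.P_le_B_mul_Q (y := x (N + (j:ℤ))) (z := x (N + 1 + (j:ℤ)))
        (u := u) hp0 hq hfm hv.1 (hvpos j) (htop j)
      rw [← hacoe j] at hP
      exact DRF.termB hr hq hP
    calc lhsD1 N x q r u f ≤ _ := h1
      _ ≤ C * (∑' j : ℕ, DRF.QI (x (N + (j:ℤ))) (x (N + 1 + (j:ℤ))) p v f) ^ (1 / p) := h2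
      _ = C * rhsD N x p v f := by rw [hrhs_eq]
  -- top constant always works
  have htopS : ∀ aseq : ℕ → ℝ≥0,
      (∑' k : ℕ, (2 : ℝ≥0∞) ^ (-((N + 1 + k : ℤ) : ℝ)) * (aseq k : ℝ≥0∞) ^ r *
          Bconst (x (N + k)) (x (N + 1 + k)) p q u v ^ r) ^ (1 / r) ≤
        (⊤ : ℝ≥0∞) * (∑' k : ℕ, (aseq k : ℝ≥0∞) ^ p) ^ (1 / p) := by
    intro aseq
    by_cases hz : ∀ k : ℕ, (aseq k : ℝ≥0∞) = 0
    · have hz2 : ∀ k : ℕ, (2 : ℝ≥0∞) ^ (-((N + 1 + k : ℤ) : ℝ)) * (aseq k : ℝ≥0∞) ^ r *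
          Bconst (x (N + k)) (x (N + 1 + k)) p q u v ^ r = 0 := fun k => by
        rw [hz k, ENNReal.zero_rpow_of_pos hr, mul_zero, zero_mul]
      rw [tsum_congr hz2, tsum_zero, ENNReal.zero_rpow_of_pos h1r]
      exact zero_le
    · push_neg at hz
      obtain ⟨k, hk⟩ := hz
      have hpos : (∑' k : ℕ, (aseq k : ℝ≥0∞) ^ p) ≠ 0 := by
        intro h0
        rw [ENNReal.tsum_eq_zero] at h0
        have := h0 k
        rcases ENNReal.rpow_eq_zero_iff.mp this with ⟨h1, _⟩ | ⟨h1, _⟩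
        · exact hk h1
        · exact ENNReal.coe_ne_top h1
      have hpos' : (∑' k : ℕ, (aseq k : ℝ≥0∞) ^ p) ^ (1 / p) ≠ 0 := by
        intro h0
        rcases ENNReal.rpow_eq_zero_iff.mp h0 with ⟨h1, _⟩ | ⟨_, h1⟩
        · exact hpos h1
        · linarith
      rw [ENNReal.top_mul hpos']
      exact le_top
  have htopF : ∀ f : ℝ → ℝ≥0∞, Measurable f →
      lhsD1 N x q r u f ≤ (⊤ : ℝ≥0∞) * rhsD N x p v f := by
    intro f hfm
    by_cases hz : rhsD N x p v f = 0
    · have hsum0 : (∑' j : ℕ, DRF.QI (x (N + (j:ℤ))) (x (N + 1 + (j:ℤ))) p v f) = 0 := by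
        rw [hrhs_eq] at hz
        rcases ENNReal.rpow_eq_zero_iff.mp hz with ⟨h, _⟩ | ⟨_, h2⟩
        · exact h
        · linarith
      rw [ENNReal.tsum_eq_zero] at hsum0
      have hL0 : lhsD1 N x q r u f = 0 := by
        rw [hlhs_eq]
        have hz2 : ∀ j : ℕ, (2 : ℝ≥0∞) ^ (-((N + 1 + j : ℤ) : ℝ)) *
            (DRF.LI (x (N + (j:ℤ))) (x (N + 1 + (j:ℤ))) q u f) ^ (r / q) = 0 := fun j => by
          rw [DRF.LI_zero hp0 hq hfm hv.1 (hvpos j) (hsum0 j),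
            ENNReal.zero_rpow_of_pos hrq, mul_zero]
        rw [tsum_congr hz2, tsum_zero, ENNReal.zero_rpow_of_pos h1r]
      rw [hL0]; exact zero_le
    · rw [ENNReal.top_mul hz]; exact le_top
  refine ⟨?_, ?_, ?_⟩
  · constructor
    · rintro ⟨C', hC'0, hC't, hfun⟩
      exact ⟨C', hC'0, hC't, lemA C' hC't.ne hfun⟩
    · rintro ⟨C, hC0, hCt, hseq⟩
      exact ⟨C, hC0, hCt, lemB C hC0.ne' hseq⟩
  · rw [one_mul]
    refine sInf_le_sInf ?_
    intro C' hC'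
    rcases eq_or_ne C' ⊤ with rfl | hne
    · exact htopS
    · exact lemA C' hne hC'
  · rw [one_mul]
    by_contra hcon
    push_neg at hcon
    obtain ⟨D, hD1, hD2⟩ := exists_between hcon
    obtain ⟨C, hCmem, hCD⟩ := sInf_lt_iff.mp hD1
    have hD0 : D ≠ 0 := by
      rintro rfl
      exact (not_lt.mpr (zero_le)) hCD
    have hDmem : ∀ aseq : ℕ → ℝ≥0,
        (∑' k : ℕ, (2 : ℝ≥0∞) ^ (-((N + 1 + k : ℤ) : ℝ)) * (aseq k : ℝ≥0∞) ^ r *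
            Bconst (x (N + k)) (x (N + 1 + k)) p q u v ^ r) ^ (1 / r) ≤
          D * (∑' k : ℕ, (aseq k : ℝ≥0∞) ^ p) ^ (1 / p) :=
      fun aseq => (hCmem aseq).trans (mul_le_mul_left hCD.le _)
    have hDF : D ∈ {C' : ℝ≥0∞ | ∀ f : ℝ → ℝ≥0∞, Measurable f →
        lhsD1 N x q r u f ≤ C' * rhsD N x p v f} := lemB D hD0 hDmem
    exact absurd (sInf_le hDF) (not_le.mpr hD2)
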